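/- Let V be a finite set with |V| = N ≥ 3, and let ϱ, c ∈ [0,1]. Let (B_e, C_e), indexed by the 2-element subsets e of V, be an independent family of pairs of random variables with values in {0,1}², such that for every e one has E[B_e] = E[C_e] = ϱ and E[B_e·C_e] = c. Let W_B := ∑ over vertices i ∈ V and 2-element subsets {j,k} of V∖{i} of B_{{i,j}}·B_{{i,k}}, and define W_C analogously from the C_e. Then E[W_B·W_C] = C(N,3)·( 9·(C(N−3,3) + 3·C(N−3,2))·ϱ⁴ + 15·(N−3)·ϱ⁴ + 12·(N−3)·ϱ²·c + 3·c² + 6·ϱ²·c ). -/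

import Mathlib

open MeasureTheory ProbabilityTheory

set_option linter.unusedSectionVars false

section AuxStmt12

lemma zo_prod {Ω ι : Type*} {f : ι → Ω → ℝ} (hzo : ∀ i ω, f i ω = 0 ∨ f i ω = 1)
    (s : Finset ι) (ω : Ω) : (∏ i ∈ s, f i ω) = 0 ∨ (∏ i ∈ s, f i ω) = 1 := by
  classical
  induction s using Finset.cons_induction with
  | empty => simp
  | cons b t hb iht =>
    rw [Finset.prod_cons]
    rcases hzo b ω with h1 | h1 <;> rcases iht with h2 | h2 <;> simp [h1, h2]

lemma zo_integrable {Ω : Type*} [MeasurableSpace Ω] (P : Measure Ω) [IsProbabilityMeasure P]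
    {f : Ω → ℝ} (hm : Measurable f) (h : ∀ ω, f ω = 0 ∨ f ω = 1) :
    Integrable f P := by
  refine (integrable_const (1:ℝ)).mono' hm.aestronglyMeasurable ?_
  filter_upwards with ω
  rcases h ω with h1 | h1 <;> simp [h1]

lemma integral_finset_prod_of_iIndep {Ω ι : Type*} [MeasurableSpace Ω] (P : Measure Ω)
    [IsProbabilityMeasure P] {f : ι → Ω → ℝ}
    (h : iIndepFun f P) (hm : ∀ i, Measurable (f i))
    (hzo : ∀ i ω, f i ω = 0 ∨ f i ω = 1) (s : Finset ι) :
    ∫ ω, ∏ i ∈ s, f i ω ∂P = ∏ i ∈ s, ∫ ω, f i ω ∂P := by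
  classical
  induction s using Finset.cons_induction with
  | empty => simp
  | cons a s ha ih =>
    have hmp : Measurable (fun ω => ∏ i ∈ s, f i ω) :=
      Finset.measurable_prod s (fun i _ => hm i)
    have hind : IndepFun (f a) (fun ω => ∏ i ∈ s, f i ω) P := by
      have h2 := (h.indepFun_finset_prod_of_notMem hm ha).symm
      have : (∏ j ∈ s, f j) = fun ω => ∏ i ∈ s, f i ω := by
        ext ω; simp [Finset.prod_apply]
      rwa [this] at h2
    simp only [Finset.prod_cons, ← ih]
    have := hind.integral_fun_mul_eq_mul_integral (zo_integrable P (hm a) (hzo a)).aestronglyMeasurable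
      (zo_integrable P hmp (zo_prod hzo s)).aestronglyMeasurable
    simpa using this

lemma cast_choose_three (n : ℕ) : ((n.choose 3 : ℕ) : ℝ) = n * (n - 1) * (n - 2) / 6 := by
  induction n with
  | zero => simp
  | succ m ih =>
    rw [Nat.choose_succ_succ]
    push_cast
    rw [ih, Nat.cast_choose_two]
    ring


variable {V : Type*} [Fintype V] [DecidableEq V]

lemma pair_inj {i j k : V} (h : ({i, j} : Finset V) = {i, k}) : j = k := by
  have hj : j ∈ ({i, k} : Finset V) := by rw [← h]; simp
  rcases Finset.mem_insert.1 hj with hji | hjk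
  · subst hji
    have hk : k ∈ ({j, j} : Finset V) := by rw [h]; simp
    have : k = j := by simpa using hk
    exact this.symm
  · simpa using hjk

def Sw (i : V) (e : Finset V) : Finset {f : Finset V // f.card = 2} :=
  Finset.univ.filter (fun f => ∃ j ∈ e, f.1 = {i, j})

lemma mem_Sw {i : V} {e : Finset V} {f : {f : Finset V // f.card = 2}} :
    f ∈ Sw i e ↔ ∃ j ∈ e, f.1 = {i, j} := by
  simp [Sw]

lemma prod_Sw {M : Type*} [CommMonoid M] {i : V} {e : Finset V}
    (he : ∀ j ∈ e, j ≠ i) (F : Finset V → M) :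
    ∏ f ∈ Sw i e, F f.1 = ∏ j ∈ e, F {i, j} := by
  refine (Finset.prod_bij (fun j hj => (⟨{i, j}, Finset.card_pair (Ne.symm (he j hj))⟩ :
      {f : Finset V // f.card = 2})) ?_ ?_ ?_ ?_).symm
  · intro j hj; exact mem_Sw.2 ⟨j, hj, rfl⟩
  · intro a ha b hb hab
    exact pair_inj (congrArg Subtype.val hab)
  · intro f hf
    obtain ⟨j, hj, hfj⟩ := mem_Sw.1 hf
    exact ⟨j, hj, Subtype.ext hfj.symm⟩
  · intro j hj; rfl

lemma card_Sw {i : V} {e : Finset V} (he : ∀ j ∈ e, j ≠ i) :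
    (Sw i e).card = e.card := by
  refine (Finset.card_bij (fun j hj => (⟨{i, j}, Finset.card_pair (Ne.symm (he j hj))⟩ :
      {f : Finset V // f.card = 2})) ?_ ?_ ?_).symm
  · intro j hj; exact mem_Sw.2 ⟨j, hj, rfl⟩
  · intro a ha b hb hab
    exact pair_inj (congrArg Subtype.val hab)
  · intro f hf
    obtain ⟨j, hj, hfj⟩ := mem_Sw.1 hf
    exact ⟨j, hj, Subtype.ext hfj.symm⟩

lemma Sw_inj {i i' : V} {e e' : Finset V}
    (he : e ∈ (Finset.univ.erase i).powersetCard 2)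
    (he' : e' ∈ (Finset.univ.erase i').powersetCard 2)
    (h : Sw i e = Sw i' e') : i = i' ∧ e = e' := by
  obtain ⟨hsub, hcard⟩ := Finset.mem_powersetCard.1 he
  obtain ⟨hsub', hcard'⟩ := Finset.mem_powersetCard.1 he'
  obtain ⟨j, k, hjk, rfl⟩ := Finset.card_eq_two.1 hcard
  have hji : j ≠ i := Finset.ne_of_mem_erase (hsub (by simp))
  have hki : k ≠ i := Finset.ne_of_mem_erase (hsub (by simp))
  have hj' : (⟨{i, j}, Finset.card_pair (Ne.symm hji)⟩ :
      {f : Finset V // f.card = 2}) ∈ Sw i' e' := by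
    rw [← h]; exact mem_Sw.2 ⟨j, by simp, rfl⟩
  have hk' : (⟨{i, k}, Finset.card_pair (Ne.symm hki)⟩ :
      {f : Finset V // f.card = 2}) ∈ Sw i' e' := by
    rw [← h]; exact mem_Sw.2 ⟨k, by simp, rfl⟩
  obtain ⟨j₁, hj₁, hj₁e⟩ := mem_Sw.1 hj'
  obtain ⟨k₁, hk₁, hk₁e⟩ := mem_Sw.1 hk'
  simp only at hj₁e hk₁e
  by_cases hii : i = i'
  · subst hii
    have h1 : j = j₁ := pair_inj hj₁e
    have h2 : k = k₁ := pair_inj hk₁e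
    refine ⟨rfl, ?_⟩
    have hss : ({j, k} : Finset V) ⊆ e' := by
      intro x hx
      rcases Finset.mem_insert.1 hx with rfl | hx
      · exact h1 ▸ hj₁
      · rw [Finset.mem_singleton.1 hx, h2]; exact hk₁
    exact (Finset.eq_of_subset_of_card_le hss (by rw [hcard', hcard])).symm ▸ rfl
  · exfalso
    have hi'j : i' = j := by
      have : i' ∈ ({i, j} : Finset V) := by rw [hj₁e]; simp
      rcases Finset.mem_insert.1 this with h1 | h1
      · exact (hii h1.symm).elim
      · exact Finset.mem_singleton.1 h1
    have hi'k : i' = k := by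
      have : i' ∈ ({i, k} : Finset V) := by rw [hk₁e]; simp
      rcases Finset.mem_insert.1 this with h1 | h1
      · exact (hii h1.symm).elim
      · exact Finset.mem_singleton.1 h1
    exact hjk (hi'j ▸ hi'k)

lemma count_mem_powersetCard {s : Finset V} {x : V} (hx : x ∈ s) :
    (((s.powersetCard 2)).filter (fun e => x ∈ e)).card = s.card - 1 := by
  have : (((s.powersetCard 2)).filter (fun e => x ∈ e)).card
      = ((s.erase x).powersetCard 1).card := by
    refine Finset.card_bij' (fun e _ => e.erase x) (fun t _ => insert x t) ?_ ?_ ?_ ?_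
    · intro e he
      obtain ⟨he2, hxe⟩ := Finset.mem_filter.1 he
      obtain ⟨hsub, hcard⟩ := Finset.mem_powersetCard.1 he2
      exact Finset.mem_powersetCard.2 ⟨Finset.erase_subset_erase x hsub,
        by rw [Finset.card_erase_of_mem hxe, hcard]⟩
    · intro t ht
      obtain ⟨hsub, hcard⟩ := Finset.mem_powersetCard.1 ht
      have hxt : x ∉ t := fun hxt => Finset.notMem_erase x s (hsub hxt)
      refine Finset.mem_filter.2 ⟨Finset.mem_powersetCard.2 ⟨?_, ?_⟩, by simp⟩
      · intro y hy
        rcases Finset.mem_insert.1 hy with rfl | hy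
        · exact hx
        · exact (Finset.erase_subset x s) (hsub hy)
      · rw [Finset.card_insert_of_notMem hxt, hcard]
    · intro e he
      exact Finset.insert_erase (Finset.mem_filter.1 he).2
    · intro t ht
      obtain ⟨hsub, _⟩ := Finset.mem_powersetCard.1 ht
      exact Finset.erase_insert (fun hxt => Finset.notMem_erase x s (hsub hxt))
  rw [this, Finset.card_powersetCard, Finset.card_erase_of_mem hx, Nat.choose_one_right]

lemma deg_Sw (N : ℕ) (hV : Fintype.card V = N) (f : {f : Finset V // f.card = 2}) :
    ∑ i : V, ∑ e ∈ (Finset.univ.erase i).powersetCard 2,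
      (if f ∈ Sw i e then (1:ℝ) else 0) = 2 * ((N : ℝ) - 2) := by
  obtain ⟨a, b, hab, hfab⟩ := Finset.card_eq_two.1 f.2
  have hN2 : 2 ≤ N := by
    rw [← hV, ← f.2]; exact Finset.card_le_card (Finset.subset_univ _)
  have hcast : ((N - 2 : ℕ) : ℝ) = (N : ℝ) - 2 := by
    push_cast [Nat.cast_sub hN2]; ring
  have hcount : ∀ (i x : V), x ≠ i →
      (∑ e ∈ (Finset.univ.erase i).powersetCard 2,
        (if x ∈ e then (1:ℝ) else 0)) = (N : ℝ) - 2 := by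
    intro i x hxi
    rw [Finset.sum_boole]
    have hx : x ∈ Finset.univ.erase i := Finset.mem_erase.2 ⟨hxi, Finset.mem_univ x⟩
    have := count_mem_powersetCard hx
    rw [Finset.filter_congr (fun e _ => Iff.rfl), this,
      Finset.card_erase_of_mem (Finset.mem_univ i), Finset.card_univ, hV]
    rw [show N - 1 - 1 = N - 2 from by omega, hcast]
  have key : ∀ i : V, (∑ e ∈ (Finset.univ.erase i).powersetCard 2,
      (if f ∈ Sw i e then (1:ℝ) else 0))
      = (if i = a then (N:ℝ) - 2 else if i = b then (N:ℝ) - 2 else 0) := by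
    intro i
    by_cases hia : i = a
    · subst hia
      rw [if_pos rfl, ← hcount i b (fun h => hab (h ▸ rfl))]
      · refine Finset.sum_congr rfl (fun e he => ?_)
        refine if_congr ?_ rfl rfl
        rw [mem_Sw]
        constructor
        · rintro ⟨j, hj, hfj⟩
          rw [hfab] at hfj
          exact (pair_inj hfj) ▸ hj
        · intro hb; exact ⟨b, hb, hfab⟩
    · by_cases hib : i = b
      · subst hib
        rw [if_neg hia, if_pos rfl, ← hcount i a (fun h => hia h.symm)]
        · refine Finset.sum_congr rfl (fun e he => ?_)
          refine if_congr ?_ rfl rfl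
          rw [mem_Sw]
          constructor
          · rintro ⟨j, hj, hfj⟩
            rw [hfab, Finset.pair_comm] at hfj
            exact (pair_inj hfj) ▸ hj
          · intro ha; exact ⟨a, ha, by rw [hfab, Finset.pair_comm]⟩
      · rw [if_neg hia, if_neg hib]
        refine Finset.sum_eq_zero (fun e he => ?_)
        rw [if_neg]
        intro hmem
        obtain ⟨j, hj, hfj⟩ := mem_Sw.1 hmem
        have : i ∈ f.1 := by rw [hfj]; simp
        rw [hfab] at this
        rcases Finset.mem_insert.1 this with h1 | h1
        · exact hia h1
        · exact hib (Finset.mem_singleton.1 h1)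
  rw [Finset.sum_congr rfl (fun i _ => key i)]
  have hsplit : ∀ i : V, (if i = a then (N:ℝ) - 2 else if i = b then (N:ℝ) - 2 else 0)
      = (if i = a then (N:ℝ) - 2 else 0) + (if i = b then (N:ℝ) - 2 else 0) := by
    intro i
    by_cases hia : i = a
    · subst hia; simp [hab]
    · simp [hia]
  rw [Finset.sum_congr rfl (fun i _ => hsplit i), Finset.sum_add_distrib]
  simp only [Finset.sum_ite_eq', Finset.mem_univ, if_pos]
  ring

lemma val_eq (ϱ c : ℝ) (S T : Finset {f : Finset V // f.card = 2})
    (hS : S.card = 2) (hT : T.card = 2) :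
    ϱ ^ ((S \ T).card + (T \ S).card) * c ^ ((S ∩ T).card)
      = ϱ ^ 4 + ((S ∩ T).card : ℝ) * (ϱ ^ 2 * c - ϱ ^ 4)
        + (if S = T then (c - ϱ ^ 2) ^ 2 else 0) := by
  have hST : (S \ T).card + (S ∩ T).card = 2 := by
    rw [Finset.card_sdiff_add_card_inter, hS]
  have hTS : (T \ S).card + (S ∩ T).card = 2 := by
    rw [Finset.inter_comm, Finset.card_sdiff_add_card_inter, hT]
  have hk2 : (S ∩ T).card ≤ 2 := by omega
  have hiff : S = T ↔ (S ∩ T).card = 2 := by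
    constructor
    · rintro rfl; rw [Finset.inter_self, hS]
    · intro hk
      have h1 : S ∩ T = S := Finset.eq_of_subset_of_card_le
        (Finset.inter_subset_left) (by rw [hk, hS])
      have h2 : S ⊆ T := h1 ▸ Finset.inter_subset_right
      exact Finset.eq_of_subset_of_card_le h2 (by rw [hS, hT])
  obtain h0 | h1 | h2 : (S ∩ T).card = 0 ∨ (S ∩ T).card = 1 ∨ (S ∩ T).card = 2 := by omega
  · rw [if_neg (fun hST' => by rw [hiff] at hST'; omega), h0,
      show (S \ T).card = 2 from by omega, show (T \ S).card = 2 from by omega]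
    push_cast
    ring
  · rw [if_neg (fun hST' => by rw [hiff] at hST'; omega), h1,
      show (S \ T).card = 1 from by omega, show (T \ S).card = 1 from by omega]
    push_cast
    ring
  · rw [if_pos (hiff.2 h2), h2,
      show (S \ T).card = 0 from by omega, show (T \ S).card = 0 from by omega]
    push_cast
    ring

lemma key_integral {Ω : Type*} [MeasurableSpace Ω] (P : Measure Ω) [IsProbabilityMeasure P]
    (V : Type*) [Fintype V] [DecidableEq V] (ϱ c : ℝ)
    (B C : Finset V → Ω → ℝ)
    (hBmeas : ∀ e : Finset V, e.card = 2 → Measurable (B e))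
    (hCmeas : ∀ e : Finset V, e.card = 2 → Measurable (C e))
    (hB01 : ∀ e : Finset V, e.card = 2 → ∀ ω, B e ω = 0 ∨ B e ω = 1)
    (hC01 : ∀ e : Finset V, e.card = 2 → ∀ ω, C e ω = 0 ∨ C e ω = 1)
    (hindep : iIndepFun
      (fun e : {e : Finset V // e.card = 2} => fun ω => (B e.1 ω, C e.1 ω)) P)
    (hEB : ∀ e : Finset V, e.card = 2 → ∫ ω, B e ω ∂P = ϱ)
    (hEC : ∀ e : Finset V, e.card = 2 → ∫ ω, C e ω ∂P = ϱ)
    (hEBC : ∀ e : Finset V, e.card = 2 → ∫ ω, B e ω * C e ω ∂P = c)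
    (S T : Finset {e : Finset V // e.card = 2}) :
    ∫ ω, (∏ f ∈ S, B f.1 ω) * (∏ f ∈ T, C f.1 ω) ∂P
      = ϱ ^ ((S \ T).card + (T \ S).card) * c ^ ((S ∩ T).card) := by
  classical
  let ι := {e : Finset V // e.card = 2}
  set g : {e : Finset V // e.card = 2} → Ω → ℝ := fun e ω =>
    (if e ∈ S then B e.1 ω else 1) * (if e ∈ T then C e.1 ω else 1) with hg
  have hgm : ∀ e : ι, Measurable (g e) := by
    intro e
    apply Measurable.mul <;> split
    · exact hBmeas e.1 e.2
    · exact measurable_const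
    · exact hCmeas e.1 e.2
    · exact measurable_const
  have hgzo : ∀ (e : ι) ω, g e ω = 0 ∨ g e ω = 1 := by
    intro e ω
    simp only [hg]
    split <;> split
    · rcases hB01 e.1 e.2 ω with h1 | h1 <;> rcases hC01 e.1 e.2 ω with h2 | h2 <;>
        simp [h1, h2]
    · rcases hB01 e.1 e.2 ω with h1 | h1 <;> simp [h1]
    · rcases hC01 e.1 e.2 ω with h2 | h2 <;> simp [h2]
    · simp
  have hgind : iIndepFun g P := by
    have := hindep.comp
      (fun e : ι => fun p : ℝ × ℝ =>
        (if e ∈ S then p.1 else 1) * (if e ∈ T then p.2 else 1))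
      (fun e => by
        apply Measurable.mul <;> split
        · exact measurable_fst
        · exact measurable_const
        · exact measurable_snd
        · exact measurable_const)
    exact this
  have hpt : ∀ ω, (∏ f ∈ S, B f.1 ω) * (∏ f ∈ T, C f.1 ω)
      = ∏ e ∈ S ∪ T, g e ω := by
    intro ω
    rw [Finset.prod_mul_distrib, Finset.prod_ite_mem, Finset.prod_ite_mem,
      Finset.union_inter_cancel_left, Finset.union_inter_cancel_right]
  have h1 : ∫ ω, (∏ f ∈ S, B f.1 ω) * (∏ f ∈ T, C f.1 ω) ∂P
      = ∏ e ∈ S ∪ T, ∫ ω, g e ω ∂P := by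
    rw [show (fun ω => (∏ f ∈ S, B f.1 ω) * (∏ f ∈ T, C f.1 ω))
        = fun ω => ∏ e ∈ S ∪ T, g e ω from funext hpt]
    exact integral_finset_prod_of_iIndep P hgind hgm hgzo _
  rw [h1]
  have hsplit : S ∪ T = ((S \ T) ∪ (S ∩ T)) ∪ (T \ S) := by
    rw [Finset.sdiff_union_inter, Finset.union_sdiff_self_eq_union]
  rw [hsplit, Finset.prod_union, Finset.prod_union (Finset.disjoint_sdiff_inter S T)]
  · have e1 : ∏ e ∈ S \ T, ∫ ω, g e ω ∂P = ϱ ^ (S \ T).card := by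
      rw [Finset.prod_congr rfl (fun e he => ?_), Finset.prod_const]
      have hS : e ∈ S := (Finset.mem_sdiff.1 he).1
      have hT : e ∉ T := (Finset.mem_sdiff.1 he).2
      simp only [hg, if_pos hS, if_neg hT, mul_one]
      exact hEB e.1 e.2
    have e2 : ∏ e ∈ S ∩ T, ∫ ω, g e ω ∂P = c ^ (S ∩ T).card := by
      rw [Finset.prod_congr rfl (fun e he => ?_), Finset.prod_const]
      have hS : e ∈ S := (Finset.mem_inter.1 he).1
      have hT : e ∈ T := (Finset.mem_inter.1 he).2
      simp only [hg, if_pos hS, if_pos hT]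
      exact hEBC e.1 e.2
    have e3 : ∏ e ∈ T \ S, ∫ ω, g e ω ∂P = ϱ ^ (T \ S).card := by
      rw [Finset.prod_congr rfl (fun e he => ?_), Finset.prod_const]
      have hS : e ∉ S := (Finset.mem_sdiff.1 he).2
      have hT : e ∈ T := (Finset.mem_sdiff.1 he).1
      simp only [hg, if_neg hS, if_pos hT, one_mul]
      exact hEC e.1 e.2
    rw [e1, e2, e3, pow_add]
    ring
  · rw [Finset.sdiff_union_inter]
    exact Finset.disjoint_sdiff

end AuxStmt12

theorem stmt_12 {Ω : Type*} [MeasurableSpace Ω] (P : Measure Ω) [IsProbabilityMeasure P]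
    (V : Type*) [Fintype V] [DecidableEq V] (N : ℕ) (hV : Fintype.card V = N)
    (hN : 3 ≤ N) (ϱ c : ℝ) (hϱ : ϱ ∈ Set.Icc (0:ℝ) 1) (hc : c ∈ Set.Icc (0:ℝ) 1)
    (B C : Finset V → Ω → ℝ)
    (hBmeas : ∀ e : Finset V, e.card = 2 → Measurable (B e))
    (hCmeas : ∀ e : Finset V, e.card = 2 → Measurable (C e))
    (hB01 : ∀ e : Finset V, e.card = 2 → ∀ ω, B e ω = 0 ∨ B e ω = 1)
    (hC01 : ∀ e : Finset V, e.card = 2 → ∀ ω, C e ω = 0 ∨ C e ω = 1)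
    (hindep : iIndepFun
      (fun e : {e : Finset V // e.card = 2} => fun ω => (B e.1 ω, C e.1 ω)) P)
    (hEB : ∀ e : Finset V, e.card = 2 → ∫ ω, B e ω ∂P = ϱ)
    (hEC : ∀ e : Finset V, e.card = 2 → ∫ ω, C e ω ∂P = ϱ)
    (hEBC : ∀ e : Finset V, e.card = 2 → ∫ ω, B e ω * C e ω ∂P = c) :
    ∫ ω, (∑ i : V, ∑ e ∈ (Finset.univ.erase i).powersetCard 2,
          ∏ j ∈ e, B {i, j} ω) *
        (∑ i : V, ∑ e ∈ (Finset.univ.erase i).powersetCard 2,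
          ∏ j ∈ e, C {i, j} ω) ∂P
      = (N.choose 3 : ℝ) *
        (9 * (((N - 3).choose 3 : ℝ) + 3 * ((N - 3).choose 2 : ℝ)) * ϱ ^ 4 +
          15 * ((N : ℝ) - 3) * ϱ ^ 4 + 12 * ((N : ℝ) - 3) * ϱ ^ 2 * c +
          3 * c ^ 2 + 6 * ϱ ^ 2 * c) := by
  classical
  set W : Finset ((_ : V) × Finset V) :=
    Finset.univ.sigma (fun i => (Finset.univ.erase i).powersetCard 2) with hWdef
  have hmemW : ∀ w ∈ W, ∀ j ∈ w.2, j ≠ w.1 := by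
    intro w hw j hj
    have h2 := (Finset.mem_sigma.1 hw).2
    exact Finset.ne_of_mem_erase ((Finset.mem_powersetCard.1 h2).1 hj)
  have hcardW : ∀ w ∈ W, w.2.card = 2 := fun w hw =>
    (Finset.mem_powersetCard.1 (Finset.mem_sigma.1 hw).2).2
  have hSwcard : ∀ w ∈ W, (Sw w.1 w.2).card = 2 := by
    intro w hw
    rw [card_Sw (hmemW w hw), hcardW w hw]
  -- rewrite the two wedge sums
  have hrw : ∀ (D : Finset V → Ω → ℝ) (ω : Ω),
      (∑ i : V, ∑ e ∈ (Finset.univ.erase i).powersetCard 2, ∏ j ∈ e, D {i, j} ω)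
      = ∑ w ∈ W, ∏ f ∈ Sw w.1 w.2, D f.1 ω := by
    intro D ω
    rw [Finset.sum_sigma']
    exact Finset.sum_congr rfl (fun w hw =>
      (prod_Sw (hmemW w hw) (fun s => D s ω)).symm)
  -- measurability / integrability of the individual terms
  have hmeasB : ∀ w : (_ : V) × Finset V,
      Measurable (fun ω => ∏ f ∈ Sw w.1 w.2, B f.1 ω) := fun w =>
    Finset.measurable_prod _ (fun f _ => hBmeas f.1 f.2)
  have hmeasC : ∀ w : (_ : V) × Finset V,
      Measurable (fun ω => ∏ f ∈ Sw w.1 w.2, C f.1 ω) := fun w =>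
    Finset.measurable_prod _ (fun f _ => hCmeas f.1 f.2)
  have hzoB : ∀ (w : (_ : V) × Finset V) ω,
      (∏ f ∈ Sw w.1 w.2, B f.1 ω) = 0 ∨ (∏ f ∈ Sw w.1 w.2, B f.1 ω) = 1 :=
    fun w ω => zo_prod (fun (f : {e : Finset V // e.card = 2}) ω' => hB01 f.1 f.2 ω') _ ω
  have hzoC : ∀ (w : (_ : V) × Finset V) ω,
      (∏ f ∈ Sw w.1 w.2, C f.1 ω) = 0 ∨ (∏ f ∈ Sw w.1 w.2, C f.1 ω) = 1 :=
    fun w ω => zo_prod (fun (f : {e : Finset V // e.card = 2}) ω' => hC01 f.1 f.2 ω') _ ω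
  -- step 1 : expand into a double sum of integrals
  have step1 : ∫ ω, (∑ i : V, ∑ e ∈ (Finset.univ.erase i).powersetCard 2,
          ∏ j ∈ e, B {i, j} ω) *
        (∑ i : V, ∑ e ∈ (Finset.univ.erase i).powersetCard 2,
          ∏ j ∈ e, C {i, j} ω) ∂P
      = ∑ p ∈ W ×ˢ W, ∫ ω,
          (∏ f ∈ Sw p.1.1 p.1.2, B f.1 ω) * (∏ f ∈ Sw p.2.1 p.2.2, C f.1 ω) ∂P := by
    have hfun : (fun ω => (∑ i : V, ∑ e ∈ (Finset.univ.erase i).powersetCard 2,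
          ∏ j ∈ e, B {i, j} ω) *
        (∑ i : V, ∑ e ∈ (Finset.univ.erase i).powersetCard 2,
          ∏ j ∈ e, C {i, j} ω))
        = fun ω => ∑ p ∈ W ×ˢ W,
          (∏ f ∈ Sw p.1.1 p.1.2, B f.1 ω) * (∏ f ∈ Sw p.2.1 p.2.2, C f.1 ω) := by
      funext ω
      rw [hrw B ω, hrw C ω, Finset.sum_mul_sum, ← Finset.sum_product']
    rw [hfun]
    refine integral_finset_sum _ (fun p _ => ?_)
    refine zo_integrable P ((hmeasB p.1).mul (hmeasC p.2)) (fun ω => ?_)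
    rcases hzoB p.1 ω with h1 | h1 <;> rcases hzoC p.2 ω with h2 | h2 <;> simp [h1, h2]
  rw [step1]
  -- step 2 : compute each integral
  have step2 : ∀ p ∈ W ×ˢ W, ∫ ω,
        (∏ f ∈ Sw p.1.1 p.1.2, B f.1 ω) * (∏ f ∈ Sw p.2.1 p.2.2, C f.1 ω) ∂P
      = ϱ ^ 4 + (((Sw p.1.1 p.1.2 ∩ Sw p.2.1 p.2.2).card : ℝ)) * (ϱ ^ 2 * c - ϱ ^ 4)
        + (if Sw p.1.1 p.1.2 = Sw p.2.1 p.2.2 then (c - ϱ ^ 2) ^ 2 else 0) := by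
    intro p hp
    obtain ⟨hp1, hp2⟩ := Finset.mem_product.1 hp
    rw [key_integral P V ϱ c B C hBmeas hCmeas hB01 hC01 hindep hEB hEC hEBC]
    exact val_eq ϱ c _ _ (hSwcard _ hp1) (hSwcard _ hp2)
  rw [Finset.sum_congr rfl step2]
  -- step 3 : split the sum into three parts
  rw [Finset.sum_add_distrib, Finset.sum_add_distrib]
  -- part 1
  have part1 : ∑ _p ∈ W ×ˢ W, (ϱ:ℝ) ^ 4 = ((W.card : ℝ)) ^ 2 * ϱ ^ 4 := by
    rw [Finset.sum_const, Finset.card_product, nsmul_eq_mul]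
    push_cast
    ring
  -- part 3
  have part3 : ∑ p ∈ W ×ˢ W,
      (if Sw p.1.1 p.1.2 = Sw p.2.1 p.2.2 then (c - ϱ ^ 2) ^ 2 else 0)
      = (W.card : ℝ) * (c - ϱ ^ 2) ^ 2 := by
    rw [Finset.sum_product]
    have : ∀ w ∈ W, (∑ w' ∈ W,
        (if Sw w.1 w.2 = Sw w'.1 w'.2 then (c - ϱ ^ 2) ^ 2 else 0))
        = (c - ϱ ^ 2) ^ 2 := by
      intro w hw
      have hcong : ∀ w' ∈ W, (if Sw w.1 w.2 = Sw w'.1 w'.2 then (c - ϱ ^ 2) ^ 2 else 0)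
          = (if w = w' then (c - ϱ ^ 2) ^ 2 else 0) := by
        intro w' hw'
        refine if_congr ?_ rfl rfl
        constructor
        · intro h
          obtain ⟨h1, h2⟩ := Sw_inj (Finset.mem_sigma.1 hw).2 (Finset.mem_sigma.1 hw').2 h
          exact Sigma.ext h1 (heq_of_eq h2)
        · rintro rfl; rfl
      rw [Finset.sum_congr rfl hcong, Finset.sum_ite_eq, if_pos hw]
    rw [Finset.sum_congr rfl this, Finset.sum_const, nsmul_eq_mul]
  -- part 2
  have hinter : ∀ (S T : Finset {f : Finset V // f.card = 2}), ((S ∩ T).card : ℝ)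
      = ∑ f : {f : Finset V // f.card = 2},
          (if f ∈ S then (1:ℝ) else 0) * (if f ∈ T then (1:ℝ) else 0) := by
    intro S T
    have : ∀ f : {f : Finset V // f.card = 2},
        (if f ∈ S then (1:ℝ) else 0) * (if f ∈ T then (1:ℝ) else 0)
        = (if f ∈ S ∩ T then (1:ℝ) else 0) := by
      intro f
      by_cases h1 : f ∈ S <;> by_cases h2 : f ∈ T <;>
        simp [h1, h2, Finset.mem_inter]
    rw [Finset.sum_congr rfl (fun f _ => this f), Finset.sum_boole]
    congr 1
    rw [Finset.filter_mem_eq_inter, Finset.univ_inter]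
  have hdeg : ∀ f : {f : Finset V // f.card = 2},
      (∑ w ∈ W, (if f ∈ Sw w.1 w.2 then (1:ℝ) else 0)) = 2 * ((N:ℝ) - 2) := by
    intro f
    rw [hWdef, Finset.sum_sigma]
    exact deg_Sw N hV f
  have hcardsub : (Fintype.card {f : Finset V // f.card = 2} : ℝ) = (N.choose 2 : ℝ) := by
    have hpow : Finset.univ.powersetCard 2
        = Finset.univ.filter (fun f : Finset V => f.card = 2) := by
      ext s
      simp [Finset.mem_powersetCard, Finset.subset_univ]
    rw [Fintype.card_subtype, ← hpow, Finset.card_powersetCard, Finset.card_univ, hV]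
  have part2 : ∑ p ∈ W ×ˢ W,
      ((Sw p.1.1 p.1.2 ∩ Sw p.2.1 p.2.2).card : ℝ) * (ϱ ^ 2 * c - ϱ ^ 4)
      = (N.choose 2 : ℝ) * (2 * ((N:ℝ) - 2)) ^ 2 * (ϱ ^ 2 * c - ϱ ^ 4) := by
    rw [← Finset.sum_mul]
    congr 1
    rw [Finset.sum_product]
    have hsw : ∀ w ∈ W, ∀ w' ∈ W, True := fun _ _ _ _ => trivial
    calc ∑ w ∈ W, ∑ w' ∈ W, ((Sw w.1 w.2 ∩ Sw w'.1 w'.2).card : ℝ)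
        = ∑ w ∈ W, ∑ w' ∈ W, ∑ f : {f : Finset V // f.card = 2},
            (if f ∈ Sw w.1 w.2 then (1:ℝ) else 0) * (if f ∈ Sw w'.1 w'.2 then (1:ℝ) else 0) := by
          exact Finset.sum_congr rfl (fun w _ => Finset.sum_congr rfl (fun w' _ => hinter _ _))
      _ = ∑ w ∈ W, ∑ f : {f : Finset V // f.card = 2}, ∑ w' ∈ W,
            (if f ∈ Sw w.1 w.2 then (1:ℝ) else 0) * (if f ∈ Sw w'.1 w'.2 then (1:ℝ) else 0) := by
          exact Finset.sum_congr rfl (fun w _ => Finset.sum_comm)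
      _ = ∑ f : {f : Finset V // f.card = 2}, ∑ w ∈ W, ∑ w' ∈ W,
            (if f ∈ Sw w.1 w.2 then (1:ℝ) else 0) * (if f ∈ Sw w'.1 w'.2 then (1:ℝ) else 0) := by
          exact Finset.sum_comm
      _ = ∑ f : {f : Finset V // f.card = 2},
            (∑ w ∈ W, (if f ∈ Sw w.1 w.2 then (1:ℝ) else 0)) *
            (∑ w' ∈ W, (if f ∈ Sw w'.1 w'.2 then (1:ℝ) else 0)) := by
          exact Finset.sum_congr rfl (fun f _ => by rw [Finset.sum_mul_sum])
      _ = ∑ _f : {f : Finset V // f.card = 2}, (2 * ((N:ℝ) - 2)) * (2 * ((N:ℝ) - 2)) := by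
          exact Finset.sum_congr rfl (fun f _ => by rw [hdeg f])
      _ = (N.choose 2 : ℝ) * (2 * ((N:ℝ) - 2)) ^ 2 := by
          rw [Finset.sum_const, nsmul_eq_mul, ← hcardsub, Finset.card_univ]
          ring
  rw [part1, part2, part3]
  -- final numeric identity
  have hWcard : (W.card : ℝ) = (N : ℝ) * ((N:ℝ) - 1) * ((N:ℝ) - 2) / 2 := by
    rw [hWdef, Finset.card_sigma]
    have : ∀ i : V, ((Finset.univ.erase i).powersetCard 2).card = (N-1).choose 2 := by
      intro i
      rw [Finset.card_powersetCard, Finset.card_erase_of_mem (Finset.mem_univ i),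
        Finset.card_univ, hV]
    rw [Finset.sum_congr rfl (fun i _ => this i), Finset.sum_const, Finset.card_univ, hV,
      nsmul_eq_mul]
    push_cast [Nat.cast_choose_two, Nat.cast_sub (show 1 ≤ N by omega)]
    ring
  have h3 : ((N - 3 : ℕ) : ℝ) = (N : ℝ) - 3 := by
    push_cast [Nat.cast_sub hN]; ring
  rw [hWcard, cast_choose_three, cast_choose_three, Nat.cast_choose_two,
    Nat.cast_choose_two, h3]
  ring
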